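/- Let δ, ρ, τ be types, let messages be given by a finite set and functions hash : α → δ, ins : α → Set (ρ × τ), del : α → Set (δ × ρ × τ), and let ≺ be a strict partial order on α (causal precedence) such that hash is injective and for every message m, every x ∈ del m satisfies x.1 ∈ {hash m' | m' ≺ m} (deletions only reference hashes of strict causal predecessors). Define the delivery function f : Set (δ × ρ × τ) → α → Set (δ × ρ × τ) by f S m = (S \ del m) ∪ {(hash m, r, t) | (r, t) ∈ ins m}. Then for any two lists l₁, l₂ of messages that are permutations of each other, have no duplicate elements, and each respect causal order, and any initial state S, List.foldl f S l₁ = List.foldl f S l₂. (The BEC replication algorithm for insert/delete updates converges: any two correct replicas that have delivered the same set of messages, each in some causal order, are in the same database state.) -/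

import Mathlib

/-- A list `l` respects causal order w.r.t. the causal precedence relation
`prec`: it has no duplicates, and whenever `prec a b` and both occur in `l`,
then `a` occurs before `b` in `l`. -/
def RespectsCausalOrder {α : Type*} (prec : α → α → Prop) (l : List α) : Prop :=
  l.Nodup ∧ ∀ a b : α, prec a b → a ∈ l → b ∈ l → [a, b].Sublist l

private lemma no_both {α : Type*} {a b : α} : ∀ {l : List α}, l.Nodup →
    [a, b].Sublist l → [b, a].Sublist l → False := by
  intro l
  induction l with
  | nil => intro _ h _; cases h
  | cons c t ih =>
    intro hnd h1 h2
    cases h1 with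
    | cons _ h1' =>
      cases h2 with
      | cons _ h2' => exact ih (List.nodup_cons.mp hnd).2 h1' h2'
      | cons_cons _ h2' =>
        exact (List.nodup_cons.mp hnd).1 (h1'.subset (by simp))
    | cons_cons _ h1' =>
      cases h2 with
      | cons _ h2' => exact (List.nodup_cons.mp hnd).1 (h2'.subset (by simp))
      | cons_cons _ h2' => exact (List.nodup_cons.mp hnd).1 (h2'.subset (by simp))

private lemma pairwise_of_respects {α : Type*} {prec : α → α → Prop} {l : List α}
    (h : RespectsCausalOrder prec l) : l.Pairwise (fun a b => ¬ prec b a) := by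
  obtain ⟨hnd, hsub⟩ := h
  refine List.pairwise_iff_forall_sublist.mpr ?_
  intro a b hab hp
  exact no_both hnd hab (hsub b a hp (hab.subset (by simp)) (hab.subset (by simp)))

private lemma foldl_eq_of_perm {α β : Type*} {prec : α → α → Prop} {f : β → α → β}
    (comm : ∀ (S : β) (a b : α), ¬ prec a b → ¬ prec b a →
      f (f S a) b = f (f S b) a) :
    ∀ (l₁ l₂ : List α), l₁.Perm l₂ → l₁.Nodup →
      l₁.Pairwise (fun a b => ¬ prec b a) → l₂.Pairwise (fun a b => ¬ prec b a) →
      ∀ S : β, l₁.foldl f S = l₂.foldl f S := by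
  intro l₁
  induction l₁ with
  | nil =>
    intro l₂ hp _ _ _ S
    rw [hp.symm.eq_nil]
  | cons a t ih =>
    intro l₂ hp hnd h1 h2 S
    have ha : a ∈ l₂ := hp.mem_iff.mp (List.mem_cons_self (a := a) (l := t))
    obtain ⟨u, v, rfl⟩ := List.append_of_mem ha
    have hnd2 : (u ++ a :: v).Nodup := hp.nodup hnd
    have hperm_t : t.Perm (u ++ v) := (hp.trans List.perm_middle).cons_inv
    have hu : ∀ x ∈ u, ¬ prec a x ∧ ¬ prec x a := by
      intro x hx
      have hxa : x ≠ a := by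
        intro hxa
        exact (List.disjoint_of_nodup_append hnd2) (hxa ▸ hx) (List.mem_cons_self (a := a) (l := v))
      constructor
      · exact (List.pairwise_append.mp h2).2.2 x hx a (List.mem_cons_self (a := a) (l := v))
      · have hxt : x ∈ t := by
          have hxl2 : x ∈ u ++ a :: v := List.mem_append_left _ hx
          rcases List.mem_cons.mp (hp.mem_iff.mpr hxl2) with h | h
          · exact absurd h hxa
          · exact h
        exact (List.pairwise_cons.mp h1).1 x hxt
    have bubble : ∀ (u' : List α), (∀ x ∈ u', ¬ prec a x ∧ ¬ prec x a) →
        ∀ (v' : List α) (T : β),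
          List.foldl f T (u' ++ a :: v') = List.foldl f (f T a) (u' ++ v') := by
      intro u'
      induction u' with
      | nil => intro _ v' T; simp
      | cons c t' ihc =>
        intro hc v' T
        have h1c := hc c (List.mem_cons_self (a := c) (l := t'))
        simp only [List.cons_append, List.foldl_cons]
        rw [ihc (fun x hx => hc x (List.mem_cons_of_mem _ hx)) v' (f T c),
          comm T c a h1c.2 h1c.1]
    rw [bubble u hu v S, List.foldl_cons]
    have hsub : (u ++ v).Sublist (u ++ a :: v) :=
      (List.Sublist.refl u).append (List.sublist_cons_self a v)
    exact ih (u ++ v) hperm_t (List.nodup_cons.mp hnd).2 (List.pairwise_cons.mp h1).2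
      (h2.sublist hsub) (f S a)

/-- Convergence of the BEC replication algorithm for insert/delete updates:
any two correct replicas that have delivered the same set of messages, each in
some causal order, are in the same database state. -/
theorem bec_replication_converges {α δ ρ τ : Type*} [Fintype α]
    (prec : α → α → Prop)
    (hirr : ∀ a : α, ¬ prec a a)
    (htrans : ∀ a b c : α, prec a b → prec b c → prec a c)
    (hash : α → δ) (ins : α → Set (ρ × τ)) (del : α → Set (δ × ρ × τ))
    (hinj : Function.Injective hash)
    (hdel : ∀ m : α, ∀ x ∈ del m, ∃ m' : α, prec m' m ∧ x.1 = hash m')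
    (f : Set (δ × ρ × τ) → α → Set (δ × ρ × τ))
    (hf : ∀ (S : Set (δ × ρ × τ)) (m : α),
      f S m = (S \ del m) ∪ {x : δ × ρ × τ | x.1 = hash m ∧ (x.2.1, x.2.2) ∈ ins m})
    (l₁ l₂ : List α) (hperm : l₁.Perm l₂)
    (h₁ : RespectsCausalOrder prec l₁) (h₂ : RespectsCausalOrder prec l₂)
    (S : Set (δ × ρ × τ)) :
    List.foldl f S l₁ = List.foldl f S l₂ := by
  have key : ∀ (a b : α), ¬ prec a b → ∀ x : δ × ρ × τ, x.1 = hash a → x ∉ del b := by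
    intro a b hab x hx hmem
    obtain ⟨m', hm', hx1⟩ := hdel b x hmem
    have : a = m' := hinj (hx.symm.trans hx1)
    exact hab (this ▸ hm')
  have comm : ∀ (T : Set (δ × ρ × τ)) (a b : α), ¬ prec a b → ¬ prec b a →
      f (f T a) b = f (f T b) a := by
    intro T a b hab hba
    rw [hf, hf, hf, hf]
    ext x
    have ha := key a b hab x
    have hb := key b a hba x
    simp only [Set.mem_union, Set.mem_diff, Set.mem_setOf_eq]
    tauto
  exact foldl_eq_of_perm comm l₁ l₂ hperm h₁.1 (pairwise_of_respects h₁)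
    (pairwise_of_respects h₂) S
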